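/- No connected bi-Cayley graph over a finite abelian group is semisymmetric; that is, if Γ = BiCay(H,R,L,S) with H abelian is edge-transitive and regular (of constant valency), then Γ is vertex-transitive. -/

import Mathlib

open SimpleGraph

/-- The bi-Cayley graph `BiCay(H,R,L,S)` on vertex set `H × Bool`,
where `(h, false)` plays the role of `h₀` and `(h, true)` of `h₁`. -/
def biCay (H : Type*) [Group H] (R L S : Set H) : SimpleGraph (H × Bool) where
  Adj a b := a ≠ b ∧
    ((a.2 = false ∧ b.2 = false ∧ b.1 * a.1⁻¹ ∈ R ∧ a.1 * b.1⁻¹ ∈ R) ∨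
     (a.2 = true ∧ b.2 = true ∧ b.1 * a.1⁻¹ ∈ L ∧ a.1 * b.1⁻¹ ∈ L) ∨
     (a.2 = false ∧ b.2 = true ∧ b.1 * a.1⁻¹ ∈ S) ∨
     (a.2 = true ∧ b.2 = false ∧ a.1 * b.1⁻¹ ∈ S))
  symm := ⟨by rintro a b ⟨hne, h⟩; exact ⟨hne.symm, by tauto⟩⟩
  loopless := ⟨by rintro a ⟨hne, _⟩; exact hne rfl⟩

/-- Right multiplication by `g⁻¹` as an automorphism of the bi-Cayley graph;
the range of this homomorphism is the group `R(H)` of all right translations. -/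
def biCayRightMul (H : Type*) [Group H] (R L S : Set H) :
    H →* (biCay H R L S ≃g biCay H R L S) where
  toFun g :=
    { toEquiv := Equiv.prodCongr (Equiv.mulRight g⁻¹) (Equiv.refl Bool)
      map_rel_iff' := by
        intro a b
        simp only [biCay, Equiv.prodCongr_apply, Equiv.coe_mulRight, Equiv.refl_apply,
          Prod.map, ne_eq, Prod.mk.injEq, Prod.ext_iff]
        constructor
        · rintro ⟨hne, h⟩
          refine ⟨by rintro ⟨h1, h2⟩; exact hne ⟨by rw [h1], h2⟩, ?_⟩
          simpa [mul_assoc] using h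
        · rintro ⟨hne, h⟩
          refine ⟨by rintro ⟨h1, h2⟩; exact hne ⟨mul_right_cancel h1, h2⟩, ?_⟩
          simpa [mul_assoc] using h }
  map_one' := by
    apply RelIso.ext; intro x; simp
  map_mul' g₁ g₂ := by
    apply RelIso.ext; intro x
    simp [RelIso.mul_apply, Prod.map, mul_assoc]

/-- The subgroup `R(H)` of right translations inside `Aut(BiCay(H,R,L,S))`. -/
def biCayRH (H : Type*) [Group H] (R L S : Set H) :
    Subgroup (biCay H R L S ≃g biCay H R L S) :=
  (biCayRightMul H R L S).range

/-- A right translation moving any vertex to any other vertex in the same part. -/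
lemma biCay_exists_translation {H : Type*} [Group H] (R L S : Set H)
    (v w : H × Bool) (h : v.2 = w.2) :
    ∃ φ : biCay H R L S ≃g biCay H R L S, φ v = w := by
  refine ⟨biCayRightMul H R L S (w.1⁻¹ * v.1), ?_⟩
  show ((Equiv.mulRight (w.1⁻¹ * v.1)⁻¹) v.1, v.2) = w
  have : v.1 * (w.1⁻¹ * v.1)⁻¹ = w.1 := by group
  exact Prod.ext (by simpa using this) h

/-- If some automorphism moves some vertex to the other part, then the graph is
vertex-transitive (using right translations within each part). -/
lemma biCay_vt_of_swap {H : Type*} [Group H] (R L S : Set H)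
    (hs : ∃ (ψ : biCay H R L S ≃g biCay H R L S) (p : H × Bool), (ψ p).2 ≠ p.2) :
    ∀ v w : H × Bool, ∃ φ : biCay H R L S ≃g biCay H R L S, φ v = w := by
  obtain ⟨ψ, p, hp⟩ := hs
  have key : ∀ v w : H × Bool, v.2 ≠ w.2 →
      ∃ φ : biCay H R L S ≃g biCay H R L S, φ v = w := by
    intro v w hvw
    rcases eq_or_ne v.2 p.2 with h | h
    · obtain ⟨t₁, ht₁⟩ := biCay_exists_translation R L S v p h
      obtain ⟨t₂, ht₂⟩ := biCay_exists_translation R L S (ψ p) w (by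
        rcases Bool.eq_false_or_eq_true (ψ p).2 with h' | h' <;>
        rcases Bool.eq_false_or_eq_true w.2 with h'' | h'' <;>
        simp_all)
      exact ⟨(t₁.trans ψ).trans t₂, by simp [ht₁, ht₂]⟩
    · obtain ⟨t₁, ht₁⟩ := biCay_exists_translation R L S v (ψ p) (by
        rcases Bool.eq_false_or_eq_true (ψ p).2 with h' | h' <;>
        rcases Bool.eq_false_or_eq_true v.2 with h'' | h'' <;>
        simp_all)
      obtain ⟨t₂, ht₂⟩ := biCay_exists_translation R L S p w (by
        rcases Bool.eq_false_or_eq_true p.2 with h' | h' <;>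
        rcases Bool.eq_false_or_eq_true w.2 with h'' | h'' <;>
        simp_all)
      refine ⟨(t₁.trans ψ.symm).trans t₂, ?_⟩
      simp [ht₁, ht₂]
  intro v w
  rcases eq_or_ne v.2 w.2 with h | h
  · exact biCay_exists_translation R L S v w h
  · exact key v w h

/-- No connected bi-Cayley graph over a finite abelian group is
semisymmetric: if `Γ = BiCay(H,R,L,S)` with `H` abelian is edge-transitive and regular
(of constant valency), then `Γ` is vertex-transitive. -/
theorem biCay_abelian_not_semisymmetric
    {H : Type*} [CommGroup H] [Finite H] (R L S : Set H)
    (hR : R⁻¹ = R) (hL : L⁻¹ = L) (h1 : (1 : H) ∉ R ∪ L)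
    (hconn : (biCay H R L S).Connected)
    (hreg : ∀ v w : H × Bool,
      Nat.card ((biCay H R L S).neighborSet v) = Nat.card ((biCay H R L S).neighborSet w))
    (hET : ∀ e₁ ∈ (biCay H R L S).edgeSet, ∀ e₂ ∈ (biCay H R L S).edgeSet,
      ∃ φ : biCay H R L S ≃g biCay H R L S, Sym2.map ⇑φ e₁ = e₂) :
    ∀ v w : H × Bool, ∃ φ : biCay H R L S ≃g biCay H R L S, φ v = w := by
  apply biCay_vt_of_swap
  by_cases hRL : R = ∅ ∧ L = ∅
  · -- the inversion automorphism swaps the two parts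
    obtain ⟨hRe, hLe⟩ := hRL
    subst hRe; subst hLe
    refine ⟨⟨⟨fun a => (a.1⁻¹, !a.2), fun a => (a.1⁻¹, !a.2),
        fun a => by simp, fun a => by simp⟩, ?_⟩, ((1 : H), false), by exact Bool.noConfusion⟩
    intro a b
    simp only [biCay, Equiv.coe_fn_mk, ne_eq, Prod.mk.injEq, Prod.ext_iff,
      Set.mem_empty_iff_false, false_and, and_false, false_or, inv_inv,
      Bool.not_eq_false', Bool.not_eq_true']
    constructor
    · rintro ⟨hne, h⟩
      refine ⟨by rintro ⟨h1, h2⟩; exact hne ⟨by rw [h1], by rw [h2]⟩, ?_⟩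
      rcases h with ⟨h1, h2, h3⟩ | ⟨h1, h2, h3⟩
      · exact Or.inr ⟨h1, h2, by rwa [mul_comm] at h3⟩
      · exact Or.inl ⟨h1, h2, by rwa [mul_comm] at h3⟩
    · rintro ⟨hne, h⟩
      refine ⟨by rintro ⟨h1, h2⟩; exact hne ⟨by rw [inv_injective h1], Bool.not_inj h2⟩, ?_⟩
      rcases h with ⟨h1, h2, h3⟩ | ⟨h1, h2, h3⟩
      · exact Or.inr ⟨h1, h2, by rw [mul_comm]; simpa using h3⟩
      · exact Or.inl ⟨h1, h2, by rw [mul_comm]; simpa using h3⟩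
  · -- `R` or `L` is nonempty; connectivity gives `S` nonempty; use edge-transitivity
    have hS : S.Nonempty := by
      rcases Set.eq_empty_or_nonempty S with hSe | hSn
      · exfalso
        subst hSe
        have hpar : ∀ {a b : H × Bool}, (biCay H R L (∅ : Set H)).Adj a b → a.2 = b.2 := by
          rintro a b ⟨-, h⟩
          simp only [Set.mem_empty_iff_false, and_false, or_false] at h
          rcases h with ⟨h1, h2, -⟩ | ⟨h1, h2, -⟩ <;> rw [h1, h2]
        obtain ⟨wk⟩ := hconn.preconnected ((1 : H), false) ((1 : H), true)
        have hW : ∀ {u v : H × Bool}, (biCay H R L (∅ : Set H)).Walk u v → u.2 = v.2 := by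
          intro u v w
          induction w with
          | nil => rfl
          | cons h _ ih => exact (hpar h).trans ih
        simpa using hW wk
      · exact hSn
    obtain ⟨s0, hs0⟩ := hS
    have he₂ : (biCay H R L S).Adj ((1 : H), false) (s0, true) :=
      ⟨by simp, Or.inr (Or.inr (Or.inl ⟨rfl, rfl, by simpa using hs0⟩))⟩
    rcases not_and_or.mp hRL with hRn | hLn
    · obtain ⟨x, hx⟩ := Set.nonempty_iff_ne_empty.mpr hRn
      have hx1 : x ≠ 1 := fun h => h1 (Or.inl (h ▸ hx))
      have hxinv : x⁻¹ ∈ R := by rw [← hR]; simpa using hx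
      have he₁ : (biCay H R L S).Adj ((1 : H), false) (x, false) :=
        ⟨by simp [Ne, eq_comm, hx1], Or.inl ⟨rfl, rfl, by simpa using hx, by simpa using hxinv⟩⟩
      obtain ⟨φ, hφ⟩ := hET _ ((biCay H R L S).mem_edgeSet.mpr he₁) _ ((biCay H R L S).mem_edgeSet.mpr he₂)
      rw [Sym2.map_pair_eq, Sym2.eq_iff] at hφ
      rcases hφ with ⟨-, h2'⟩ | ⟨h1', -⟩
      · exact ⟨φ, (x, false), by simp [h2']⟩
      · exact ⟨φ, ((1 : H), false), by simp [h1']⟩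
    · obtain ⟨x, hx⟩ := Set.nonempty_iff_ne_empty.mpr hLn
      have hx1 : x ≠ 1 := fun h => h1 (Or.inr (h ▸ hx))
      have hxinv : x⁻¹ ∈ L := by rw [← hL]; simpa using hx
      have he₁ : (biCay H R L S).Adj ((1 : H), true) (x, true) :=
        ⟨by simp [Ne, eq_comm, hx1],
          Or.inr (Or.inl ⟨rfl, rfl, by simpa using hx, by simpa using hxinv⟩)⟩
      obtain ⟨φ, hφ⟩ := hET _ ((biCay H R L S).mem_edgeSet.mpr he₁) _ ((biCay H R L S).mem_edgeSet.mpr he₂)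
      rw [Sym2.map_pair_eq, Sym2.eq_iff] at hφ
      rcases hφ with ⟨h1', -⟩ | ⟨-, h2'⟩
      · exact ⟨φ, ((1 : H), true), by simp [h1']⟩
      · exact ⟨φ, (x, true), by simp [h2']⟩
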